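/- Let d = 2 and define the expected soft-Dice loss L(c_1, c_2) = E[1 − 2(Y_1 c_1 + Y_2 c_2)/(Y_1 + Y_2 + c_1 + c_2)] for (c_1, c_2) ∈ [0,1]², with the convention 0/0 := 0 (which only occurs when Y = (0,0) and c = (0,0), where the summand's correction term vanishes). Then for (c_1, c_2) with c_1 + c_2 > 0, ∂L/∂c_1 = −2[ 2 p_1 p_2/(2 + c_1 + c_2)² + (p_1(1−p_2) + (p_1 − p_2) c_2)/(1 + c_1 + c_2)² ]. Consequently, if p_1 ≥ p_2 and 2 p_2 − p_1 − p_1 p_2 ≥ 0, then L is nonincreasing in each coordinate on [0,1]², and (c_1, c_2) = (1,1) minimizes L over [0,1]². -/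

import Mathlib

/-- The expected soft-Dice loss for `d = 2`:
`L(c₁, c₂) = E[1 - 2(Y₁c₁ + Y₂c₂)/(Y₁ + Y₂ + c₁ + c₂)]`, where `Y₁, Y₂` are independent
Bernoulli with success probabilities `p₁, p₂` (the convention `0/0 := 0` is Lean's
division; it only matters for the `Y = (0,0)` term, whose correction vanishes). -/
noncomputable def softDiceRisk (p1 p2 c1 c2 : ℝ) : ℝ :=
  ∑ y : Fin 2 → Bool,
    ((if y 0 then p1 else 1 - p1) * (if y 1 then p2 else 1 - p2)) *
      (1 - 2 * ((if y 0 then c1 else 0) + (if y 1 then c2 else 0)) /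
        ((if y 0 then (1 : ℝ) else 0) + (if y 1 then (1 : ℝ) else 0) + c1 + c2))

lemma softDice_closed (p1 p2 c1 c2 : ℝ) : softDiceRisk p1 p2 c1 c2 =
    1 - 2 * (p1 * p2 * (c1 + c2) / (2 + c1 + c2) +
      (p1 * (1 - p2) * c1 + (1 - p1) * p2 * c2) / (1 + c1 + c2)) := by
  rw [softDiceRisk, ← Equiv.sum_comp (piFinTwoEquiv fun _ => Bool).symm]
  simp only [Fintype.sum_prod_type, Fintype.sum_bool, piFinTwoEquiv_symm_apply,
    Fin.cons_zero, Fin.cons_one, if_true, if_false, Bool.false_eq_true]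
  ring

lemma softDice_derivAux (A B C c2 : ℝ) {c1 : ℝ} (h : -1 < c1 + c2) :
    HasDerivAt (fun t : ℝ => 1 - 2 * (A * (t + c2) / (2 + t + c2) +
        (B * t + C * c2) / (1 + t + c2)))
      (-2 * (2 * A / (2 + c1 + c2) ^ 2 + (B + (B - C) * c2) / (1 + c1 + c2) ^ 2)) c1 := by
  have hd2 : (2 + c1 + c2) ≠ 0 := by linarith
  have hd1 : (1 + c1 + c2) ≠ 0 := by linarith
  have h1 : HasDerivAt (fun t : ℝ => A * (t + c2) / (2 + t + c2))
      ((A * (2 + c1 + c2) - A * (c1 + c2) * 1) / (2 + c1 + c2) ^ 2) c1 :=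
    HasDerivAt.div (by simpa using ((hasDerivAt_id c1).add_const c2).const_mul A)
      (((hasDerivAt_id c1).const_add 2).add_const c2) hd2
  have h2 : HasDerivAt (fun t : ℝ => (B * t + C * c2) / (1 + t + c2))
      ((B * (1 + c1 + c2) - (B * c1 + C * c2) * 1) / (1 + c1 + c2) ^ 2) c1 :=
    HasDerivAt.div (by simpa using ((hasDerivAt_id c1).const_mul B).add_const (C * c2))
      (((hasDerivAt_id c1).const_add 1).add_const c2) hd1
  have H := ((h1.add h2).const_mul 2).const_sub 1
  refine H.congr_deriv ?_
  ring

lemma softDice_deriv1 (p1 p2 : ℝ) {c1 : ℝ} (c2 : ℝ) (h : -1 < c1 + c2) :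
    HasDerivAt (fun t => softDiceRisk p1 p2 t c2)
      (-2 * (2 * p1 * p2 / (2 + c1 + c2) ^ 2 +
        (p1 * (1 - p2) + (p1 - p2) * c2) / (1 + c1 + c2) ^ 2)) c1 := by
  have := softDice_derivAux (p1 * p2) (p1 * (1 - p2)) ((1 - p1) * p2) c2 h
  have heq : (fun t => softDiceRisk p1 p2 t c2) =
      (fun t : ℝ => 1 - 2 * (p1 * p2 * (t + c2) / (2 + t + c2) +
        (p1 * (1 - p2) * t + (1 - p1) * p2 * c2) / (1 + t + c2))) := by
    funext t; rw [softDice_closed]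
  rw [heq]
  convert this using 1
  ring

lemma softDice_deriv2 (p1 p2 : ℝ) (c1 : ℝ) {c2 : ℝ} (h : -1 < c1 + c2) :
    HasDerivAt (fun t => softDiceRisk p1 p2 c1 t)
      (-2 * (2 * p1 * p2 / (2 + c2 + c1) ^ 2 +
        ((1 - p1) * p2 + (p2 - p1) * c1) / (1 + c2 + c1) ^ 2)) c2 := by
  have h' : -1 < c2 + c1 := by linarith
  have := softDice_derivAux (p1 * p2) ((1 - p1) * p2) (p1 * (1 - p2)) c1 h'
  have heq : (fun t => softDiceRisk p1 p2 c1 t) =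
      (fun t : ℝ => 1 - 2 * (p1 * p2 * (t + c1) / (2 + t + c1) +
        ((1 - p1) * p2 * t + p1 * (1 - p2) * c1) / (1 + t + c1))) := by
    funext t; rw [softDice_closed]; ring
  rw [heq]
  convert this using 1
  ring

/-- **Soft-Dice gradient and its consequence.** For `(c₁, c₂) ∈ [0,1]²` with `c₁ + c₂ > 0`,
`∂L/∂c₁ = -2[2p₁p₂/(2+c₁+c₂)² + (p₁(1-p₂) + (p₁-p₂)c₂)/(1+c₁+c₂)²]`.
Consequently, if `p₁ ≥ p₂` and `2p₂ - p₁ - p₁p₂ ≥ 0`, then `L` is nonincreasing in each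
coordinate on `[0,1]²` and `(1,1)` minimizes `L` over `[0,1]²`. -/
theorem softDice_deriv_and_minimizer (p1 p2 : ℝ)
    (hp1 : p1 ∈ Set.Icc (0 : ℝ) 1) (hp2 : p2 ∈ Set.Icc (0 : ℝ) 1) :
    (∀ c1 c2 : ℝ, c1 ∈ Set.Icc (0 : ℝ) 1 → c2 ∈ Set.Icc (0 : ℝ) 1 → 0 < c1 + c2 →
        HasDerivAt (fun t => softDiceRisk p1 p2 t c2)
          (-2 * (2 * p1 * p2 / (2 + c1 + c2) ^ 2 +
            (p1 * (1 - p2) + (p1 - p2) * c2) / (1 + c1 + c2) ^ 2)) c1) ∧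
    ((p2 ≤ p1 ∧ 0 ≤ 2 * p2 - p1 - p1 * p2) →
      (∀ c2 ∈ Set.Icc (0 : ℝ) 1, ∀ c1 ∈ Set.Icc (0 : ℝ) 1, ∀ c1' ∈ Set.Icc (0 : ℝ) 1,
          c1 ≤ c1' → softDiceRisk p1 p2 c1' c2 ≤ softDiceRisk p1 p2 c1 c2) ∧
      (∀ c1 ∈ Set.Icc (0 : ℝ) 1, ∀ c2 ∈ Set.Icc (0 : ℝ) 1, ∀ c2' ∈ Set.Icc (0 : ℝ) 1,
          c2 ≤ c2' → softDiceRisk p1 p2 c1 c2' ≤ softDiceRisk p1 p2 c1 c2) ∧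
      (∀ c1 ∈ Set.Icc (0 : ℝ) 1, ∀ c2 ∈ Set.Icc (0 : ℝ) 1,
          softDiceRisk p1 p2 1 1 ≤ softDiceRisk p1 p2 c1 c2)) := by
  obtain ⟨hp1l, hp1u⟩ := hp1
  obtain ⟨hp2l, hp2u⟩ := hp2
  constructor
  · intro c1 c2 hc1 hc2 hpos
    exact softDice_deriv1 p1 p2 c2 (by linarith)
  rintro ⟨hle, hgap⟩
  have anti1 : ∀ c2 ∈ Set.Icc (0 : ℝ) 1,
      AntitoneOn (fun t => softDiceRisk p1 p2 t c2) (Set.Icc 0 1) := by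
    intro c2 hc2
    apply antitoneOn_of_deriv_nonpos (convex_Icc 0 1)
    · intro x hx
      exact (softDice_deriv1 p1 p2 c2 (by cases hx; cases hc2; linarith)).continuousAt.continuousWithinAt
    · intro x hx
      rw [interior_Icc] at hx
      exact (softDice_deriv1 p1 p2 c2 (by cases hx; cases hc2; linarith)).differentiableAt.differentiableWithinAt
    · intro x hx
      rw [interior_Icc] at hx
      obtain ⟨hx0, hx1⟩ := hx
      obtain ⟨hc20, hc21⟩ := hc2
      rw [(softDice_deriv1 p1 p2 c2 (by linarith)).deriv]
      have h1 : (0:ℝ) ≤ 2 * p1 * p2 / (2 + x + c2) ^ 2 := by positivity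
      have h2 : (0:ℝ) ≤ (p1 * (1 - p2) + (p1 - p2) * c2) / (1 + x + c2) ^ 2 := by
        apply div_nonneg _ (by positivity)
        nlinarith
      nlinarith
  have anti2 : ∀ c1 ∈ Set.Icc (0 : ℝ) 1,
      AntitoneOn (fun t => softDiceRisk p1 p2 c1 t) (Set.Icc 0 1) := by
    intro c1 hc1
    apply antitoneOn_of_deriv_nonpos (convex_Icc 0 1)
    · intro x hx
      exact (softDice_deriv2 p1 p2 c1 (by cases hx; cases hc1; linarith)).continuousAt.continuousWithinAt
    · intro x hx
      rw [interior_Icc] at hx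
      exact (softDice_deriv2 p1 p2 c1 (by cases hx; cases hc1; linarith)).differentiableAt.differentiableWithinAt
    · intro x hx
      rw [interior_Icc] at hx
      obtain ⟨hx0, hx1⟩ := hx
      obtain ⟨hc10, hc11⟩ := hc1
      rw [(softDice_deriv2 p1 p2 c1 (by linarith)).deriv]
      have h1 : (0:ℝ) ≤ 2 * p1 * p2 / (2 + x + c1) ^ 2 := by positivity
      have h2 : (0:ℝ) ≤ ((1 - p1) * p2 + (p2 - p1) * c1) / (1 + x + c1) ^ 2 := by
        apply div_nonneg _ (by positivity)
        nlinarith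
      nlinarith
  refine ⟨fun c2 hc2 c1 hc1 c1' hc1' h => anti1 c2 hc2 hc1 hc1' h,
    fun c1 hc1 c2 hc2 c2' hc2' h => anti2 c1 hc1 hc2 hc2' h, ?_⟩
  intro c1 hc1 c2 hc2
  have one_mem : (1:ℝ) ∈ Set.Icc (0:ℝ) 1 := ⟨zero_le_one, le_rfl⟩
  calc softDiceRisk p1 p2 1 1 ≤ softDiceRisk p1 p2 c1 1 :=
        anti1 1 one_mem hc1 one_mem hc1.2
    _ ≤ softDiceRisk p1 p2 c1 c2 := anti2 c1 hc1 hc2 one_mem hc2.2
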